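/- Let R_1, R_2 > 0, τ_1, τ_2 > 0 with R_1/τ_1 < R_2/τ_2, and ε_1 ≥ 0. If 0 < ε_2 ≤ ε_1 (2^{R_2}-1)/(2^{R_1}-1) + (2^{R_2}-1)/(2^{R_1/τ_1}-1) - (2^{R_2}-1)/(2^{R_2/τ_2}-1), then for any A ≥ 0, c ≥ 0 the allocations a_1 = (2^{R_1}-1)/(2^{R_1/τ_1}-1) + ε_1 + (2^{R_1}-1)(A' + c·2^{R_2} + ε_2) and a_2 = (2^{R_2}-1)/(2^{R_2/τ_2}-1) + ε_2 + (2^{R_2}-1)(A + c) with A' = a_2 + A satisfy a_1 ≥ a_2 · 2^{R_2}(2^{R_1}-1)/(2^{R_2}-1). -/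

import Mathlib

set_option maxHeartbeats 2000000 in

theorem stmt_17 (R₁ R₂ τ₁ τ₂ ε₁ ε₂ A c : ℝ)
    (hR₁ : 0 < R₁) (hR₂ : 0 < R₂) (hτ₁ : 0 < τ₁) (hτ₂ : 0 < τ₂)
    (hord : R₁ / τ₁ < R₂ / τ₂) (hε₁ : 0 ≤ ε₁)
    (hε₂pos : 0 < ε₂)
    (hε₂ : ε₂ ≤ ε₁ * ((2 : ℝ) ^ R₂ - 1) / ((2 : ℝ) ^ R₁ - 1) +
      ((2 : ℝ) ^ R₂ - 1) / ((2 : ℝ) ^ (R₁ / τ₁) - 1) -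
      ((2 : ℝ) ^ R₂ - 1) / ((2 : ℝ) ^ (R₂ / τ₂) - 1))
    (hA : 0 ≤ A) (hc : 0 ≤ c)
    (a₁ a₂ : ℝ)
    (ha₂ : a₂ = ((2 : ℝ) ^ R₂ - 1) / ((2 : ℝ) ^ (R₂ / τ₂) - 1) + ε₂ +
      ((2 : ℝ) ^ R₂ - 1) * (A + c))
    (ha₁ : a₁ = ((2 : ℝ) ^ R₁ - 1) / ((2 : ℝ) ^ (R₁ / τ₁) - 1) + ε₁ +
      ((2 : ℝ) ^ R₁ - 1) * ((a₂ + A) + c * (2 : ℝ) ^ R₂ + ε₂)) :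
    a₁ ≥ a₂ * (2 : ℝ) ^ R₂ * ((2 : ℝ) ^ R₁ - 1) / ((2 : ℝ) ^ R₂ - 1) := by
  have h2 : (1:ℝ) < 2 := by norm_num
  have key : ∀ x : ℝ, 0 < x → (0:ℝ) < 2 ^ x - 1 := by
    intro x hx
    have : (2:ℝ)^(0:ℝ) < 2^x := (Real.rpow_lt_rpow_left_iff h2).mpr hx
    simpa using this
  have hg1 := key R₁ hR₁
  have hg2 := key R₂ hR₂
  have hb1 := key (R₁/τ₁) (div_pos hR₁ hτ₁)
  have hb2 := key (R₂/τ₂) (div_pos hR₂ hτ₂)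
  -- clear denominators in hε₂
  have hε₂' : ε₂ * ((2^R₁-1) * ((2^(R₁/τ₁)-1) * (2^(R₂/τ₂)-1))) ≤
      ε₁ * (2^R₂-1) * ((2^(R₁/τ₁)-1) * (2^(R₂/τ₂)-1)) +
      (2^R₂-1) * ((2^R₁-1) * (2^(R₂/τ₂)-1)) -
      (2^R₂-1) * ((2^R₁-1) * (2^(R₁/τ₁)-1)) := by
    have h := mul_le_mul_of_nonneg_right hε₂
      (le_of_lt (by positivity : (0:ℝ) < (2^R₁-1) * ((2^(R₁/τ₁)-1) * (2^(R₂/τ₂)-1))))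
    calc ε₂ * ((2^R₁-1) * ((2^(R₁/τ₁)-1) * (2^(R₂/τ₂)-1)))
        ≤ (ε₁ * ((2 : ℝ) ^ R₂ - 1) / ((2 : ℝ) ^ R₁ - 1) +
          ((2 : ℝ) ^ R₂ - 1) / ((2 : ℝ) ^ (R₁ / τ₁) - 1) -
          ((2 : ℝ) ^ R₂ - 1) / ((2 : ℝ) ^ (R₂ / τ₂) - 1)) *
          ((2^R₁-1) * ((2^(R₁/τ₁)-1) * (2^(R₂/τ₂)-1))) := h
      _ = _ := by field_simp
  subst ha₂ ha₁
  rw [ge_iff_le, div_le_iff₀ hg2, ← mul_le_mul_iff_of_pos_right (show (0:ℝ) < (2^(R₁/τ₁)-1)*(2^(R₂/τ₂)-1) by positivity)]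
  have hQ : ((2:ℝ)^R₂-1) / ((2:ℝ)^(R₂/τ₂)-1) * ((2:ℝ)^(R₂/τ₂)-1) = ((2:ℝ)^R₂-1) := div_mul_cancel₀ _ (ne_of_gt hb2)
  have hP : ((2:ℝ)^R₁-1) / ((2:ℝ)^(R₁/τ₁)-1) * ((2:ℝ)^(R₁/τ₁)-1) = ((2:ℝ)^R₁-1) := div_mul_cancel₀ _ (ne_of_gt hb1)
  field_simp
  have h1 : (0:ℝ) ≤ ((2:ℝ)^(R₂/τ₂)-1) *
      (ε₁ * ((2:ℝ)^R₂-1) * (((2:ℝ)^(R₁/τ₁)-1) * ((2:ℝ)^(R₂/τ₂)-1)) +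
        ((2:ℝ)^R₂-1) * (((2:ℝ)^R₁-1) * ((2:ℝ)^(R₂/τ₂)-1)) -
        ((2:ℝ)^R₂-1) * (((2:ℝ)^R₁-1) * ((2:ℝ)^(R₁/τ₁)-1)) -
        ε₂ * (((2:ℝ)^R₁-1) * (((2:ℝ)^(R₁/τ₁)-1) * ((2:ℝ)^(R₂/τ₂)-1)))) :=
    mul_nonneg hb2.le (by linarith)
  have h2 : (0:ℝ) ≤ ((2:ℝ)^(R₂/τ₂)-1) * (ε₂ * ((2:ℝ)^R₁-1) * ((2:ℝ)^R₂-1) *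
      ((2:ℝ)^(R₁/τ₁)-1) * ((2:ℝ)^(R₂/τ₂)-1)) := by positivity
  have h3 : (0:ℝ) ≤ ((2:ℝ)^(R₂/τ₂)-1) * (c * ((2:ℝ)^R₁-1) * ((2:ℝ)^R₂-1) * ((2:ℝ)^R₂-1) *
      ((2:ℝ)^(R₁/τ₁)-1) * ((2:ℝ)^(R₂/τ₂)-1)) := by positivity
  nlinarith [h1, h2, h3]
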